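/- Let p be a prime, u ∈ 1 + 2pZ_p, and let ζ_n be a primitive p^n-th root of unity in an algebraic closure of Q_p (with ζ_0 = 1). Let Φ_m(T) = Σ_{t=0}^{p−1} T^{t p^{m−1}} be the p^m-th cyclotomic polynomial evaluated at T. Then for m ≥ 1: if m < n, ord_p(Φ_m(u ζ_n)) = (p^m − p^{m−1})/(p^n − p^{n−1}); and if m > n, ord_p(Φ_m(u ζ_n)) = 1. -/

import Mathlib

open Finset

section OrdLemmas
variable {K : Type} [Field K] (ord : K → ℚ)
  (hmul : ∀ x y : K, x ≠ 0 → y ≠ 0 → ord (x * y) = ord x + ord y)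

include hmul

theorem ord_one' : ord 1 = 0 := by
  have h := hmul 1 1 one_ne_zero one_ne_zero
  rw [mul_one] at h; linarith

theorem ord_pow' (x : K) (hx : x ≠ 0) (k : ℕ) : ord (x ^ k) = k * ord x := by
  induction k with
  | zero => simpa using ord_one' ord hmul
  | succ k ih =>
    rw [pow_succ, hmul _ _ (pow_ne_zero _ hx) hx, ih]
    push_cast; ring

theorem ord_neg' (x : K) (hx : x ≠ 0) : ord (-x) = ord x := by
  have h1 : ord ((-1 : K) * (-1)) = ord (-1) + ord (-1) :=
    hmul _ _ (by norm_num) (by norm_num)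
  rw [show ((-1 : K) * (-1)) = 1 by ring, ord_one' ord hmul] at h1
  have h2 : ord (-1 : K) = 0 := by linarith
  rw [show (-x : K) = (-1) * x by ring, hmul _ _ (by norm_num) hx, h2, zero_add]

theorem ord_prod' {ι : Type*} (s : Finset ι) (f : ι → K) (hf : ∀ i ∈ s, f i ≠ 0) :
    ord (∏ i ∈ s, f i) = ∑ i ∈ s, ord (f i) := by
  classical
  induction s using Finset.cons_induction with
  | empty => simpa using ord_one' ord hmul
  | cons a s ha ih =>
    rw [prod_cons, sum_cons,
      hmul _ _ (hf a (mem_cons_self a s)) (prod_ne_zero_iff.2 fun i hi => hf i (mem_cons_of_mem hi)),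
      ih (fun i hi => hf i (mem_cons_of_mem hi))]

variable (hadd : ∀ x y : K, x ≠ 0 → y ≠ 0 → x + y ≠ 0 → min (ord x) (ord y) ≤ ord (x + y))

include hadd

omit hmul in
theorem ord_sum_ge' {ι : Type*} (s : Finset ι) (f : ι → K) (c : ℚ)
    (hf : ∀ i ∈ s, f i ≠ 0 ∧ c ≤ ord (f i)) (hs : ∑ i ∈ s, f i ≠ 0) :
    c ≤ ord (∑ i ∈ s, f i) := by
  classical
  induction s using Finset.cons_induction with
  | empty => simp at hs
  | cons a s ha ih =>
    rw [sum_cons] at hs ⊢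
    by_cases h0 : ∑ i ∈ s, f i = 0
    · rw [h0, add_zero]; exact (hf a (mem_cons_self a s)).2
    · have h1 := hadd _ _ (hf a (mem_cons_self a s)).1 h0 hs
      have h2 := ih (fun i hi => hf i (mem_cons_of_mem hi)) h0
      have h3 := (hf a (mem_cons_self a s)).2
      exact le_trans (le_min h3 h2) h1

theorem ord_add_eq' (x y : K) (hx : x ≠ 0) (h : y = 0 ∨ (y ≠ 0 ∧ ord x < ord y)) :
    x + y ≠ 0 ∧ ord (x + y) = ord x := by
  rcases h with rfl | ⟨hy, hlt⟩
  · simpa using hx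
  · have hne : x + y ≠ 0 := by
      intro h0
      have : y = -x := by linear_combination h0
      rw [this, ord_neg' ord hmul x hx] at hlt
      exact lt_irrefl _ hlt
    refine ⟨hne, le_antisymm ?_ ?_⟩
    · by_contra hgt
      push_neg at hgt
      have h2 := hadd (x + y) (-y) hne (neg_ne_zero.2 hy) (by simpa using hx)
      rw [add_neg_cancel_right, ord_neg' ord hmul y hy] at h2
      exact absurd h2 (not_le.2 (lt_min hgt hlt))
    · have h1 := hadd x y hx hy hne
      rw [min_eq_left (le_of_lt hlt)] at h1
      exact h1


omit hadd in
theorem ord_root_zero (N : ℕ) (hN : 0 < N) (z : K) (hz : z ^ N = 1) : ord z = 0 := by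
  have hz0 : z ≠ 0 := by
    intro h; rw [h, zero_pow hN.ne'] at hz; exact zero_ne_one hz
  have h1 := ord_pow' ord hmul z hz0 N
  rw [hz, ord_one' ord hmul] at h1
  have : (N : ℚ) ≠ 0 := Nat.cast_ne_zero.2 hN.ne'
  field_simp at h1
  exact (mul_eq_zero.1 h1.symm).resolve_left this

theorem ord_one_sub_le {p : ℕ} [Fact p.Prime] (n : ℕ) (hn : 1 ≤ n) (ζ ζ' : K)
    (hζ : IsPrimitiveRoot ζ (p ^ n)) (hζ' : IsPrimitiveRoot ζ' (p ^ n)) :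
    ord (1 - ζ) ≤ ord (1 - ζ') := by
  have hp : 1 < p := (Fact.out : p.Prime).one_lt
  have hlt : 1 < p ^ n := Nat.one_lt_pow (by omega) hp
  have : NeZero (p ^ n) := ⟨by positivity⟩
  obtain ⟨i, hi, hpow⟩ := hζ.eq_pow_of_pow_eq_one hζ'.pow_eq_one
  have hz0 : ζ ≠ 0 := hζ.ne_zero (by positivity)
  have h1 : (1 : K) - ζ ≠ 0 := sub_ne_zero.2 (Ne.symm (hζ.ne_one hlt))
  have h1' : (1 : K) - ζ' ≠ 0 := sub_ne_zero.2 (Ne.symm (hζ'.ne_one hlt))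
  have key : (1 : K) - ζ' = (∑ k ∈ range i, ζ ^ k) * (1 - ζ) := by
    have := geom_sum_mul ζ i
    rw [← hpow]
    linear_combination this
  have hS : (∑ k ∈ range i, ζ ^ k) ≠ 0 := by
    intro h0; rw [key, h0, zero_mul] at h1'; exact h1' rfl
  have hordz : ord ζ = 0 := ord_root_zero ord hmul (p ^ n) (by positivity) ζ hζ.pow_eq_one
  have hSge : (0 : ℚ) ≤ ord (∑ k ∈ range i, ζ ^ k) := by
    apply ord_sum_ge' ord hadd _ _ _ _ hS
    intro k _
    refine ⟨pow_ne_zero _ hz0, ?_⟩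
    rw [ord_pow' ord hmul ζ hz0 k, hordz, mul_zero]
  rw [key, hmul _ _ hS h1]
  linarith

theorem ord_one_sub_prim {p : ℕ} [Fact p.Prime] [Algebra ℚ_[p] K]
    (hext : ∀ x : ℚ_[p], x ≠ 0 → ord (algebraMap ℚ_[p] K x) = (x.valuation : ℚ))
    (n : ℕ) (hn : 1 ≤ n) (ζ : K) (hζ : IsPrimitiveRoot ζ (p ^ n)) :
    ord (1 - ζ) = 1 / ((p : ℚ) ^ n - (p : ℚ) ^ (n - 1)) := by
  classical
  have hp : p.Prime := Fact.out
  have hp1 : 1 < p := hp.one_lt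
  have hlt : 1 < p ^ n := Nat.one_lt_pow (by omega) hp1
  have hpos : 0 < p ^ n := by positivity
  -- p = ∏ (1 - μ)
  obtain ⟨n', rfl⟩ : ∃ n', n = n' + 1 := ⟨n - 1, by omega⟩
  have hcyc := Polynomial.cyclotomic_eq_prod_X_sub_primitiveRoots hζ
  have heval : ((p : K)) = ∏ μ ∈ primitiveRoots (p ^ (n' + 1)) K, (1 - μ) := by
    have h1 := Polynomial.eval_one_cyclotomic_prime_pow (R := K) (p := p) n'
    rw [hcyc] at h1
    rw [← h1, Polynomial.eval_prod]
    simp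
  have hmem : ∀ μ ∈ primitiveRoots (p ^ (n' + 1)) K, IsPrimitiveRoot μ (p ^ (n' + 1)) :=
    fun μ hμ => (mem_primitiveRoots hpos).1 hμ
  have hne : ∀ μ ∈ primitiveRoots (p ^ (n' + 1)) K, (1 : K) - μ ≠ 0 := fun μ hμ =>
    sub_ne_zero.2 (Ne.symm ((hmem μ hμ).ne_one hlt))
  have hordp : ord ((p : K)) = 1 := by
    have h2 : ((p : K)) = algebraMap ℚ_[p] K ((p : ℚ_[p])) := by
      simp [map_natCast]
    rw [h2, hext _ (Nat.cast_ne_zero.2 hp.ne_zero), Padic.valuation_p]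
    norm_num
  have heq : ∀ μ ∈ primitiveRoots (p ^ (n' + 1)) K, ord (1 - μ) = ord (1 - ζ) :=
    fun μ hμ => le_antisymm (ord_one_sub_le ord hmul hadd _ hn _ _ (hmem μ hμ) hζ)
      (ord_one_sub_le ord hmul hadd _ hn _ _ hζ (hmem μ hμ))
  have hprod : ord ((p : K)) = ∑ μ ∈ primitiveRoots (p ^ (n' + 1)) K, ord (1 - μ) := by
    rw [heval]; exact ord_prod' ord hmul _ _ hne
  rw [Finset.sum_congr rfl heq, Finset.sum_const, hζ.card_primitiveRoots,
    Nat.totient_prime_pow hp (by omega)] at hprod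
  rw [hordp] at hprod
  have hcast : ((p ^ (n' + 1 - 1) * (p - 1) : ℕ) : ℚ) = (p : ℚ) ^ (n' + 1) - (p : ℚ) ^ (n' + 1 - 1) := by
    push_cast [Nat.cast_sub hp1.le]
    ring
  have hp1' : (1:ℚ) < (p:ℚ) := by exact_mod_cast hp1
  have hlt2 : (p:ℚ) ^ n' < (p:ℚ) ^ (n' + 1) := by
    calc (p:ℚ) ^ n' = (p:ℚ) ^ n' * 1 := by ring
      _ < (p:ℚ) ^ n' * p := by
          have := pow_pos (show (0:ℚ) < p by linarith) n'
          nlinarith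
      _ = (p:ℚ) ^ (n' + 1) := by ring
  have hd : (p : ℚ) ^ (n' + 1) - (p : ℚ) ^ (n' + 1 - 1) ≠ 0 := by
    simp only [Nat.add_sub_cancel]
    intro h; nlinarith
  rw [nsmul_eq_mul, hcast] at hprod
  simp only [Nat.add_sub_cancel] at hprod hd ⊢
  rw [eq_div_iff hd]
  linear_combination -hprod

end OrdLemmas
section Padics
open Finset
variable {p : ℕ} [hp : Fact p.Prime]

theorem unit_norm' (w : ℤ_[p]) : ‖(1 + p * w : ℤ_[p])‖ = 1 := by
  have hp1 : (1:ℝ) < p := by exact_mod_cast hp.out.one_lt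
  have h1 : ‖((p : ℤ_[p]) * w : ℤ_[p])‖ < 1 := by
    calc ‖((p:ℤ_[p]) * w : ℤ_[p])‖ ≤ ‖(p:ℤ_[p])‖ * ‖w‖ := norm_mul_le _ _
      _ ≤ ‖(p:ℤ_[p])‖ * 1 := by
          have := PadicInt.norm_le_one w
          have h0 : (0:ℝ) ≤ ‖(p:ℤ_[p])‖ := norm_nonneg _
          nlinarith
      _ = (p:ℝ)⁻¹ := by rw [PadicInt.norm_p, mul_one]
      _ < 1 := by rw [inv_lt_one_iff₀]; right; exact hp1
  have hne : ‖(1 : ℤ_[p])‖ ≠ ‖((p:ℤ_[p]) * w : ℤ_[p])‖ := by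
    rw [norm_one]; exact ne_of_gt h1
  rw [PadicInt.norm_add_eq_max_of_ne hne, norm_one]
  exact max_eq_left (le_of_lt h1)

theorem padic_step (k : ℕ) (a v : ℤ_[p]) (hv : v = 1 + 2 * p ^ (k + 1) * a) :
    ∃ η w : ℤ_[p], η = 1 + p * w ∧ (∑ j ∈ range p, v ^ j) = p * η ∧
      v ^ p = 1 + 2 * p ^ (k + 2) * (a * η) := by
  have hv1 : v - 1 = 2 * p ^ (k + 1) * a := by rw [hv]; ring
  have egeom : ∀ j : ℕ, v ^ j - 1 = (∑ i ∈ range j, v ^ i) * (v - 1) :=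
    fun j => (geom_sum_mul v j).symm
  set W := ∑ j ∈ range p, ∑ i ∈ range j, v ^ i with hW
  have e2 : (∑ j ∈ range p, v ^ j) = p + 2 * p ^ (k + 1) * a * W := by
    have h' : ∑ j ∈ range p, v ^ j = ∑ j ∈ range p, ((v ^ j - 1) + 1) := by simp
    rw [h', Finset.sum_add_distrib, Finset.sum_const, card_range,
      Finset.sum_congr rfl (fun j _ => egeom j), ← Finset.sum_mul, hv1, ← hW]
    simp [nsmul_eq_mul]
    ring
  have hW' : ∃ w : ℤ_[p], 2 * (p : ℤ_[p]) ^ k * a * W = p * w := by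
    rcases hp.out.eq_two_or_odd' with h2 | hodd
    · subst h2
      exact ⟨((2:ℕ) : ℤ_[2]) ^ k * a * W, by push_cast; ring⟩
    · -- p odd : p ∣ W
      have e4 : ∀ j : ℕ, (∑ i ∈ range j, v ^ i) =
          (j : ℤ_[p]) + (∑ i ∈ range j, ∑ i' ∈ range i, v ^ i') * (v - 1) := by
        intro j
        have h' : ∑ i ∈ range j, v ^ i = ∑ i ∈ range j, ((v ^ i - 1) + 1) := by simp
        rw [h', Finset.sum_add_distrib, Finset.sum_const, card_range,
          Finset.sum_congr rfl (fun i _ => egeom i), ← Finset.sum_mul]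
        simp [nsmul_eq_mul]
        ring
      set V := ∑ j ∈ range p, ∑ i ∈ range j, ∑ i' ∈ range i, v ^ i' with hV
      have e5 : W = (∑ j ∈ range p, (j : ℤ_[p])) + V * (v - 1) := by
        rw [hW, Finset.sum_congr rfl (fun j _ => e4 j), Finset.sum_add_distrib, ← Finset.sum_mul, ← hV]
      have e6 : (∑ j ∈ range p, (j : ℤ_[p])) = ((p * ((p - 1) / 2) : ℕ) : ℤ_[p]) := by
        have : (∑ j ∈ range p, (j : ℤ_[p])) = ((∑ j ∈ range p, j : ℕ) : ℤ_[p]) := by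
          push_cast; rfl
        rw [this, Finset.sum_range_id,
          Nat.mul_div_assoc p ((Nat.Odd.sub_odd hodd odd_one).two_dvd)]
      refine ⟨2 * (p : ℤ_[p]) ^ k * a * ((((p - 1) / 2 : ℕ) : ℤ_[p]) + V * (2 * p ^ k * a)), ?_⟩
      have : W = p * ((((p - 1) / 2 : ℕ) : ℤ_[p]) + V * (2 * p ^ k * a)) := by
        rw [e5, e6, hv1]; push_cast; ring
      rw [this]; ring
  obtain ⟨w, hw⟩ := hW'
  refine ⟨1 + 2 * (p : ℤ_[p]) ^ k * a * W, w, by rw [hw], ?_, ?_⟩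
  · rw [e2]; ring
  · have h8 := egeom p
    rw [e2, hv1] at h8
    have : v ^ p = 1 + (p + 2 * (p:ℤ_[p]) ^ (k + 1) * a * W) * (2 * p ^ (k + 1) * a) := by
      linear_combination h8
    rw [this]; ring

theorem padic_upow (u t : ℤ_[p]) (hu : u = 1 + 2 * p * t) (j : ℕ) :
    ∃ a : ℤ_[p], u ^ p ^ j = 1 + 2 * p ^ (j + 1) * a := by
  induction j with
  | zero => exact ⟨t, by rw [pow_zero, pow_one, hu, pow_one]⟩
  | succ j ih =>
    obtain ⟨a, ha⟩ := ih
    obtain ⟨η, w, hη, hS, hvp⟩ := padic_step j a _ ha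
    refine ⟨a * η, ?_⟩
    rw [pow_succ, pow_mul, hvp]

theorem val_of_norm (x : ℚ_[p]) (hx : x ≠ 0) (k : ℤ) (h : ‖x‖ = (p : ℝ) ^ (-k)) :
    x.valuation = k := by
  rw [Padic.norm_eq_zpow_neg_valuation hx] at h
  have hp1 : (1 : ℝ) < p := by exact_mod_cast hp.out.one_lt
  have := zpow_right_injective₀ (by linarith : (0:ℝ) < (p:ℝ)) (by linarith : (p:ℝ) ≠ 1) h
  omega

theorem val_ge_of_norm (x : ℚ_[p]) (hx : x ≠ 0) (k : ℤ) (h : ‖x‖ ≤ (p : ℝ) ^ (-k)) :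
    k ≤ x.valuation := by
  rw [Padic.norm_eq_zpow_neg_valuation hx] at h
  have hp1 : (1 : ℝ) < p := by exact_mod_cast hp.out.one_lt
  have := (zpow_le_zpow_iff_right₀ hp1).1 h
  omega

end Padics



/-- Let `p` be a prime, `u ∈ 1 + 2pℤ_p`, and `ζ` a primitive `p^n`-th root of unity in an
algebraic extension `K` of `ℚ_p` (so determined by its unique valuation `ord` extending
the `p`-adic one, normalized by `ord p = 1`).  With
`Φ_m(T) = Σ_{t=0}^{p-1} T^{t p^{m-1}}` the `p^m`-th cyclotomic polynomial: for `m ≥ 1`,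
if `m < n` then `ord(Φ_m(uζ)) = (p^m - p^{m-1})/(p^n - p^{n-1})`, and if `m > n` then
`ord(Φ_m(uζ)) = 1`. -/
theorem stmt_1 (p : ℕ) [Fact p.Prime]
    (K : Type) [Field K] [Algebra ℚ_[p] K] [Algebra.IsAlgebraic ℚ_[p] K]
    (ord : K → ℚ)
    (hmul : ∀ x y : K, x ≠ 0 → y ≠ 0 → ord (x * y) = ord x + ord y)
    (hadd : ∀ x y : K, x ≠ 0 → y ≠ 0 → x + y ≠ 0 → min (ord x) (ord y) ≤ ord (x + y))
    (hext : ∀ x : ℚ_[p], x ≠ 0 → ord (algebraMap ℚ_[p] K x) = (x.valuation : ℚ))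
    (u : ℤ_[p]) (hu : ∃ t : ℤ_[p], u = 1 + 2 * p * t)
    (n : ℕ) (ζ : K) (hζ : IsPrimitiveRoot ζ (p ^ n))
    (m : ℕ) (hm : 1 ≤ m) :
    (m < n →
      ord (∑ t ∈ Finset.range p,
          (algebraMap ℚ_[p] K (u : ℚ_[p]) * ζ) ^ (t * p ^ (m - 1))) =
        ((p : ℚ) ^ m - (p : ℚ) ^ (m - 1)) / ((p : ℚ) ^ n - (p : ℚ) ^ (n - 1))) ∧
    (n < m →
      ord (∑ t ∈ Finset.range p,
          (algebraMap ℚ_[p] K (u : ℚ_[p]) * ζ) ^ (t * p ^ (m - 1))) = 1) := by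
  classical
  have hpp : p.Prime := Fact.out
  have hp1 : 1 < p := hpp.one_lt
  have hp1Q : (1 : ℚ) < (p : ℚ) := by exact_mod_cast hp1
  have hp2Q : (2 : ℚ) ≤ (p : ℚ) := by exact_mod_cast hp1
  obtain ⟨t, hut⟩ := hu
  set U : K := algebraMap ℚ_[p] K (u : ℚ_[p]) with hU
  have hunorm : ‖u‖ = 1 := by
    have h' : u = 1 + p * (2 * t) := by rw [hut]; ring
    rw [h']; exact unit_norm' (2 * t)
  have hu0 : (u : ℚ_[p]) ≠ 0 := by
    intro h
    have h2 : ‖(u : ℚ_[p])‖ = 0 := by rw [h, norm_zero]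
    rw [PadicInt.padic_norm_e_of_padicInt, hunorm] at h2; norm_num at h2
  have hU0 : U ≠ 0 := by
    rw [hU]; exact (map_ne_zero (algebraMap ℚ_[p] K)).2 hu0
  have hordU : ord U = 0 := by
    rw [hU, hext _ hu0]
    have hval : (u : ℚ_[p]).valuation = 0 := by
      apply val_of_norm _ hu0 0
      rw [PadicInt.padic_norm_e_of_padicInt, hunorm]; norm_num
    rw [hval]; norm_num
  have hζ0 : ζ ≠ 0 := by
    intro h
    have := hζ.pow_eq_one
    rw [h, zero_pow (by positivity : p ^ n ≠ 0)] at this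
    exact zero_ne_one this
  constructor
  · -- case m < n
    intro hmn
    obtain ⟨m', rfl⟩ : ∃ m', m = m' + 1 := ⟨m - 1, by omega⟩
    have key : ∀ k : ℕ, k + 1 ≤ n → (1 ≤ k ∨ k + 2 ≤ n) →
        (U * ζ) ^ p ^ k - 1 ≠ 0 ∧
        ord ((U * ζ) ^ p ^ k - 1) = 1 / ((p : ℚ) ^ (n - k) - (p : ℚ) ^ (n - k - 1)) := by
      intro k hk hk2
      have hnk1 : 1 ≤ n - k := by omega
      have hζk : IsPrimitiveRoot (ζ ^ p ^ k) (p ^ (n - k)) :=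
        hζ.pow (by positivity) (by rw [← pow_add]; congr 1; omega)
      have hζk1 : ζ ^ p ^ k ≠ 1 := hζk.ne_one (Nat.one_lt_pow (by omega) hp1)
      have hsub0 : ζ ^ p ^ k - 1 ≠ 0 := sub_ne_zero.2 hζk1
      have hordζk : ord (ζ ^ p ^ k - 1) = 1 / ((p : ℚ) ^ (n - k) - (p : ℚ) ^ (n - k - 1)) := by
        rw [show ζ ^ p ^ k - 1 = -(1 - ζ ^ p ^ k) by ring,
          ord_neg' ord hmul _ (sub_ne_zero.2 (Ne.symm hζk1)),
          ord_one_sub_prim ord hmul hadd hext _ hnk1 _ hζk]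
      have hx0 : U ^ p ^ k * (ζ ^ p ^ k - 1) ≠ 0 := mul_ne_zero (pow_ne_zero _ hU0) hsub0
      have hordx : ord (U ^ p ^ k * (ζ ^ p ^ k - 1)) =
          1 / ((p : ℚ) ^ (n - k) - (p : ℚ) ^ (n - k - 1)) := by
        rw [hmul _ _ (pow_ne_zero _ hU0) hsub0, ord_pow' ord hmul _ hU0, hordU, hordζk]
        ring
      -- numeric bound on e_k
      have hpow_eq : (p : ℚ) ^ (n - k) = (p : ℚ) ^ (n - k - 1) * p := by
        rw [← pow_succ]; congr 1; omega
      have h1pow : (1 : ℚ) ≤ (p : ℚ) ^ (n - k - 1) := one_le_pow₀ (by linarith)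
      have hDpos : (1 : ℚ) ≤ (p : ℚ) ^ (n - k) - (p : ℚ) ^ (n - k - 1) := by
        rw [hpow_eq]
        have hh := mul_le_mul h1pow (show (1:ℚ) ≤ (p:ℚ) - 1 by linarith) (by norm_num)
          (by linarith : (0:ℚ) ≤ (p:ℚ) ^ (n - k - 1))
        nlinarith [hh]
      have hbound : 1 / ((p : ℚ) ^ (n - k) - (p : ℚ) ^ (n - k - 1)) < (k : ℚ) + 1 := by
        rcases hk2 with hk1 | hkn
        · have : 1 / ((p : ℚ) ^ (n - k) - (p : ℚ) ^ (n - k - 1)) ≤ 1 := by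
            rw [div_le_one (by linarith)]; linarith
          have : (2 : ℚ) ≤ (k : ℚ) + 1 := by exact_mod_cast Nat.succ_le_succ hk1
          linarith
        · have hself : (p : ℚ) ≤ (p : ℚ) ^ (n - k - 1) := by
            apply le_self_pow₀ (by linarith)
            omega
          have hD2 : (2 : ℚ) ≤ (p : ℚ) ^ (n - k) - (p : ℚ) ^ (n - k - 1) := by
            rw [hpow_eq]
            have hh := mul_le_mul hself (show (1:ℚ) ≤ (p:ℚ) - 1 by linarith) (by norm_num)
              (by positivity : (0:ℚ) ≤ (p:ℚ) ^ (n - k - 1))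
            nlinarith [hh]
          have : 1 / ((p : ℚ) ^ (n - k) - (p : ℚ) ^ (n - k - 1)) ≤ 1 / 2 := by
            apply one_div_le_one_div_of_le <;> linarith
          have : (1 : ℚ) ≤ (k : ℚ) + 1 := by
            have := Nat.cast_nonneg (α := ℚ) k; linarith
          linarith
      -- the U^{p^k} - 1 part
      obtain ⟨a, ha⟩ := padic_upow u t hut k
      have hy : U ^ p ^ k - 1 = algebraMap ℚ_[p] K (((u ^ p ^ k : ℤ_[p]) : ℚ_[p]) - 1) := by
        rw [hU, ← map_pow, map_sub, map_one]
        norm_cast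
      have hdisj : (U ^ p ^ k - 1 = 0) ∨ (U ^ p ^ k - 1 ≠ 0 ∧
          ord (U ^ p ^ k * (ζ ^ p ^ k - 1)) < ord (U ^ p ^ k - 1)) := by
        by_cases h0 : ((u ^ p ^ k : ℤ_[p]) : ℚ_[p]) - 1 = 0
        · left; rw [hy, h0, map_zero]
        · right
          refine ⟨by rw [hy]; exact (map_ne_zero _).2 h0, ?_⟩
          rw [hy, hext _ h0, hordx]
          have hval : ((k : ℤ) + 1) ≤ (((u ^ p ^ k : ℤ_[p]) : ℚ_[p]) - 1).valuation := by
            apply val_ge_of_norm _ h0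
            have hrw : ((u ^ p ^ k : ℤ_[p]) : ℚ_[p]) - 1 =
                ((2 * (p : ℤ_[p]) ^ (k + 1) * a : ℤ_[p]) : ℚ_[p]) := by
              rw [ha]; push_cast; ring
            rw [hrw, PadicInt.padic_norm_e_of_padicInt]
            calc ‖(2 * (p : ℤ_[p]) ^ (k + 1) * a : ℤ_[p])‖
                ≤ ‖(2 * (p : ℤ_[p]) ^ (k + 1) : ℤ_[p])‖ * ‖a‖ := norm_mul_le _ _
              _ ≤ (‖(2 : ℤ_[p])‖ * ‖((p : ℤ_[p]) ^ (k + 1) : ℤ_[p])‖) * 1 := by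
                  apply mul_le_mul (norm_mul_le _ _) (PadicInt.norm_le_one a)
                    (norm_nonneg a) (by positivity)
              _ ≤ (1 * ‖((p : ℤ_[p]) ^ (k + 1) : ℤ_[p])‖) * 1 := by
                  have := PadicInt.norm_le_one (2 : ℤ_[p])
                  have h0' : (0:ℝ) ≤ ‖((p : ℤ_[p]) ^ (k + 1) : ℤ_[p])‖ := norm_nonneg _
                  nlinarith
              _ = ‖((p : ℤ_[p]) ^ (k + 1) : ℤ_[p])‖ := by ring
              _ = (p : ℝ) ^ (-((k : ℤ) + 1)) := by
                  rw [PadicInt.norm_p_pow]; norm_num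
          calc 1 / ((p : ℚ) ^ (n - k) - (p : ℚ) ^ (n - k - 1)) < (k : ℚ) + 1 := hbound
            _ ≤ ((((u ^ p ^ k : ℤ_[p]) : ℚ_[p]) - 1).valuation : ℚ) := by exact_mod_cast hval
      have hsplit : (U * ζ) ^ p ^ k - 1 =
          U ^ p ^ k * (ζ ^ p ^ k - 1) + (U ^ p ^ k - 1) := by
        rw [mul_pow]; ring
      have hres := ord_add_eq' ord hmul hadd _ _ hx0 (by
        rcases hdisj with h | h
        · exact Or.inl h
        · exact Or.inr h)
      rw [← hsplit] at hres
      exact ⟨hres.1, by rw [hres.2, hordx]⟩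
    obtain ⟨hne1, he1⟩ := key m' (by omega) (Or.inr (by omega))
    obtain ⟨hne2, he2⟩ := key (m' + 1) (by omega) (Or.inl (by omega))
    simp only [Nat.add_sub_cancel]
    have hsum : (∑ t ∈ range p, (U * ζ) ^ (t * p ^ m')) =
        ∑ t ∈ range p, ((U * ζ) ^ p ^ m') ^ t := by
      apply Finset.sum_congr rfl; intro t' _
      rw [← pow_mul, mul_comm t' (p ^ m')]
    have hgeo : (∑ t ∈ range p, ((U * ζ) ^ p ^ m') ^ t) * ((U * ζ) ^ p ^ m' - 1) =
        (U * ζ) ^ p ^ (m' + 1) - 1 := by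
      rw [geom_sum_mul, ← pow_mul, ← pow_succ]
    have hS0 : (∑ t ∈ range p, ((U * ζ) ^ p ^ m') ^ t) ≠ 0 := by
      intro h0
      rw [h0, zero_mul] at hgeo
      exact hne2 hgeo.symm
    have hord : ord (∑ t ∈ range p, ((U * ζ) ^ p ^ m') ^ t) + ord ((U * ζ) ^ p ^ m' - 1) =
        ord ((U * ζ) ^ p ^ (m' + 1) - 1) := by
      rw [← hmul _ _ hS0 hne1, hgeo]
    rw [hsum]
    rw [he1, he2] at hord
    obtain ⟨d', hn'⟩ : ∃ d', n = (m' + 1) + (d' + 1) := ⟨n - m' - 2, by omega⟩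
    rw [show n - m' - 1 = d' + 1 from by omega, show n - (m' + 1) - 1 = d' from by omega,
      show n - m' = d' + 2 from by omega, show n - (m' + 1) = d' + 1 from by omega] at hord
    rw [show n = m' + d' + 2 from by omega]
    simp only [show m' + d' + 2 - 1 = m' + d' + 1 from by omega]
    have hppos : (0 : ℚ) < (p : ℚ) := by linarith
    have hnz : ∀ j : ℕ, (p : ℚ) ^ (j + 1) - (p : ℚ) ^ j ≠ 0 := by
      intro j
      have h1 := pow_pos hppos j
      have : (p : ℚ) ^ (j + 1) = (p : ℚ) ^ j * p := by ring
      nlinarith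
    have h1 := hnz d'
    have h2 := hnz (d' + 1)
    have h3 : (p : ℚ) ^ (m' + d' + 2) - (p : ℚ) ^ (m' + d' + 1) ≠ 0 := hnz (m' + d' + 1)
    have hgoal : ord (∑ t ∈ range p, ((U * ζ) ^ p ^ m') ^ t) =
        1 / ((p : ℚ) ^ (d' + 1) - (p : ℚ) ^ d') - 1 / ((p : ℚ) ^ (d' + 2) - (p : ℚ) ^ (d' + 1)) := by
      linarith
    rw [hgoal]
    field_simp
    ring
  · -- case n < m
    intro hnm
    obtain ⟨m₁, rfl⟩ : ∃ m₁, m = m₁ + 1 := ⟨m - 1, by omega⟩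
    simp only [Nat.add_sub_cancel]
    have hζ1 : ζ ^ p ^ m₁ = 1 := by
      have h' : p ^ m₁ = p ^ n * p ^ (m₁ - n) := by rw [← pow_add]; congr 1; omega
      rw [h', pow_mul, hζ.pow_eq_one, one_pow]
    obtain ⟨a, ha⟩ := padic_upow u t hut m₁
    obtain ⟨η, w, hη, hS, _⟩ := padic_step m₁ a _ ha
    have hterm : ∀ t' ∈ range p, (U * ζ) ^ (t' * p ^ m₁) =
        algebraMap ℚ_[p] K ((((u ^ p ^ m₁) ^ t' : ℤ_[p]) : ℚ_[p])) := by
      intro t' _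
      calc (U * ζ) ^ (t' * p ^ m₁) = (U ^ p ^ m₁ * ζ ^ p ^ m₁) ^ t' := by
            rw [← mul_pow, ← pow_mul, mul_comm t']
        _ = (U ^ p ^ m₁) ^ t' := by rw [hζ1, mul_one]
        _ = algebraMap ℚ_[p] K ((((u ^ p ^ m₁) ^ t' : ℤ_[p]) : ℚ_[p])) := by
            rw [hU, ← map_pow, ← map_pow]; norm_cast
    have hsum2 : (∑ t' ∈ range p, (U * ζ) ^ (t' * p ^ m₁)) =
        algebraMap ℚ_[p] K (((p * η : ℤ_[p]) : ℚ_[p])) := by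
      rw [Finset.sum_congr rfl hterm]
      calc ∑ t' ∈ range p, algebraMap ℚ_[p] K ((((u ^ p ^ m₁) ^ t' : ℤ_[p]) : ℚ_[p]))
          = ∑ t' ∈ range p, ((algebraMap ℚ_[p] K).comp (PadicInt.Coe.ringHom))
              ((u ^ p ^ m₁) ^ t') := rfl
        _ = ((algebraMap ℚ_[p] K).comp (PadicInt.Coe.ringHom))
              (∑ t' ∈ range p, (u ^ p ^ m₁) ^ t') := (map_sum _ _ _).symm
        _ = algebraMap ℚ_[p] K (((p * η : ℤ_[p]) : ℚ_[p])) := by rw [hS]; rfl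
    have hηnorm : ‖η‖ = 1 := by rw [hη]; exact unit_norm' w
    have hnorm : ‖((p * η : ℤ_[p]) : ℚ_[p])‖ = (p : ℝ) ^ (-(1 : ℤ)) := by
      have hcast : ((p * η : ℤ_[p]) : ℚ_[p]) = (p : ℚ_[p]) * ((η : ℤ_[p]) : ℚ_[p]) := by
        push_cast; ring
      rw [hcast, norm_mul, Padic.norm_p, PadicInt.padic_norm_e_of_padicInt, hηnorm,
        mul_one, zpow_neg, zpow_one]
    have hne0 : ((p * η : ℤ_[p]) : ℚ_[p]) ≠ 0 := by
      intro h0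
      rw [h0, norm_zero] at hnorm
      have : (0 : ℝ) < (p : ℝ) ^ (-(1 : ℤ)) := by positivity
      linarith
    rw [hsum2, hext _ hne0, val_of_norm _ hne0 1 hnorm]
    norm_num
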